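/- Let d ≥ 1, let f : ℝ^d → ℝ^d be C¹, let D : ℝ^d → ℝ^{d×d} be C², and let q : ℝ^d → ℝ be a C² function with compact support. Then, with ℒq = −∑_{i=1}^d ∂_{x_i}(f_i q) + (1/2) ∑_{i,j=1}^d ∂_{x_i}∂_{x_j}(D_{ij} q) and b_i = (1/2) ∑_{j=1}^d ∂_{x_j} D_{ij} − f_i, the following integration-by-parts identity holds: −∫_{ℝ^d} (ℒq)(x) q(x) dx = (1/2) ∫_{ℝ^d} [ ∑_{i,j=1}^d D_{ij}(x) ∂_{x_i}q(x) ∂_{x_j}q(x) − (∇·b)(x) q(x)² ] dx. -/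

import Mathlib

open MeasureTheory

/-- Partial derivative in the `i`-th coordinate direction. -/
noncomputable def pd {d : ℕ} (i : Fin d) (g : (Fin d → ℝ) → ℝ) : (Fin d → ℝ) → ℝ :=
  fun x => fderiv ℝ g x (Pi.single i 1)

/-- The Fokker-Planck operator `ℒq = -∑ᵢ ∂ᵢ(fᵢ q) + (1/2) ∑ᵢⱼ ∂ᵢ∂ⱼ(Dᵢⱼ q)`. -/
noncomputable def fokkerPlanck {d : ℕ} (f : (Fin d → ℝ) → Fin d → ℝ)
    (D : (Fin d → ℝ) → Fin d → Fin d → ℝ) (q : (Fin d → ℝ) → ℝ) : (Fin d → ℝ) → ℝ :=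
  fun x => -(∑ i, pd i (fun y => f y i * q y) x)
    + (1 / 2) * ∑ i, ∑ j, pd i (pd j (fun y => D y i j * q y)) x

/-- The vector field `bᵢ = (1/2) ∑ⱼ ∂ⱼ Dᵢⱼ - fᵢ`. -/
noncomputable def bvec {d : ℕ} (f : (Fin d → ℝ) → Fin d → ℝ)
    (D : (Fin d → ℝ) → Fin d → Fin d → ℝ) : (Fin d → ℝ) → Fin d → ℝ :=
  fun x i => (1 / 2) * ∑ j, pd j (fun y => D y i j) x - f x i

/-- The divergence `∇·b = ∑ᵢ ∂ᵢ bᵢ` of the vector field `b`. -/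
noncomputable def divb {d : ℕ} (f : (Fin d → ℝ) → Fin d → ℝ)
    (D : (Fin d → ℝ) → Fin d → Fin d → ℝ) : (Fin d → ℝ) → ℝ :=
  fun x => ∑ i, pd i (fun y => bvec f D y i) x

section aux
variable {d : ℕ}

lemma pd_contDiff {n : ℕ∞} {g : (Fin d → ℝ) → ℝ} (hg : ContDiff ℝ (n + 1) g) (i : Fin d) :
    ContDiff ℝ n (pd i g) := by
  unfold pd
  exact (hg.fderiv_right le_rfl).clm_apply contDiff_const

lemma pd_contDiff_one {g : (Fin d → ℝ) → ℝ} (hg : ContDiff ℝ 2 g) (i : Fin d) :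
    ContDiff ℝ 1 (pd i g) := by
  refine pd_contDiff (n := 1) ?_ i
  exact_mod_cast hg

lemma pd_continuous {g : (Fin d → ℝ) → ℝ} (hg : ContDiff ℝ 1 g) (i : Fin d) :
    Continuous (pd i g) := by
  have h : ContDiff ℝ ((0 : ℕ∞) + 1) g := by exact_mod_cast hg
  exact (pd_contDiff h i).continuous

lemma pd_hasCompactSupport {g : (Fin d → ℝ) → ℝ} (hg : HasCompactSupport g) (i : Fin d) :
    HasCompactSupport (pd i g) := by
  unfold pd
  exact hg.fderiv_apply ℝ (Pi.single i 1)

lemma pd_mul {a b : (Fin d → ℝ) → ℝ} {x : Fin d → ℝ} (ha : DifferentiableAt ℝ a x)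
    (hb : DifferentiableAt ℝ b x) (i : Fin d) :
    pd i (fun y => a y * b y) x = pd i a x * b x + a x * pd i b x := by
  unfold pd
  rw [fderiv_fun_mul ha hb]
  simp only [ContinuousLinearMap.add_apply, ContinuousLinearMap.smul_apply, smul_eq_mul]
  ring

lemma pd_integral_mul (i : Fin d) {u v : (Fin d → ℝ) → ℝ}
    (hu : ContDiff ℝ 1 u) (hus : HasCompactSupport u)
    (hv : ContDiff ℝ 1 v) (hvs : HasCompactSupport v) :
    ∫ x, pd i u x * v x = -∫ x, u x * pd i v x := by
  obtain ⟨Cu, hCu⟩ := ContDiff.lipschitzWith_of_hasCompactSupport hus hu one_ne_zero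
  obtain ⟨Cv, hCv⟩ := ContDiff.lipschitzWith_of_hasCompactSupport hvs hv one_ne_zero
  have key := LipschitzWith.integral_lineDeriv_mul_eq (μ := volume) hCu hCv hvs (Pi.single i 1)
  have h1 : ∀ x, lineDeriv ℝ u x (Pi.single i 1) = pd i u x := fun x =>
    ((hu.differentiable one_ne_zero) x).lineDeriv_eq_fderiv
  have h2 : ∀ x, lineDeriv ℝ v x (-Pi.single i 1) = -pd i v x := fun x => by
    rw [((hv.differentiable one_ne_zero) x).lineDeriv_eq_fderiv, map_neg]
    rfl
  simp only [h1, h2] at key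
  rw [key, ← integral_neg]
  exact integral_congr_ae (Filter.Eventually.of_forall fun x => by ring)

end aux

/-- Integration-by-parts identity for the Fokker-Planck operator:
`-∫ (ℒq) q = (1/2) ∫ (∑ᵢⱼ Dᵢⱼ ∂ᵢq ∂ⱼq - (∇·b) q²)`. -/
theorem stmt_1 {d : ℕ} (hd : 1 ≤ d)
    (f : (Fin d → ℝ) → Fin d → ℝ) (hf : ContDiff ℝ 1 f)
    (D : (Fin d → ℝ) → Fin d → Fin d → ℝ) (hD : ContDiff ℝ 2 D)
    (q : (Fin d → ℝ) → ℝ) (hq : ContDiff ℝ 2 q) (hqsupp : HasCompactSupport q) :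
    -∫ x, fokkerPlanck f D q x * q x
      = (1 / 2) * ∫ x,
          ((∑ i, ∑ j, D x i j * pd i q x * pd j q x) - divb f D x * (q x) ^ 2) := by
  classical
  have hq1 : ContDiff ℝ 1 q := hq.of_le one_le_two
  have hfi : ∀ i, ContDiff ℝ 1 fun y => f y i := fun i => contDiff_pi.1 hf i
  have hDij : ∀ i j, ContDiff ℝ 2 fun y => D y i j := fun i j =>
    contDiff_pi.1 (contDiff_pi.1 hD i) j
  have hpdq : ∀ i, ContDiff ℝ 1 (pd i q) := fun i => pd_contDiff_one hq i
  have hpdqs : ∀ i, HasCompactSupport (pd i q) := fun i => pd_hasCompactSupport hqsupp i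
  have hfq : ∀ i, ContDiff ℝ 1 fun y => f y i * q y := fun i => (hfi i).mul hq1
  have hfqs : ∀ i, HasCompactSupport fun y => f y i * q y := fun i => hqsupp.mul_left
  have hDq : ∀ i j, ContDiff ℝ 2 fun y => D y i j * q y := fun i j => (hDij i j).mul hq
  have hDqs : ∀ i j, HasCompactSupport fun y => D y i j * q y := fun i j => hqsupp.mul_left
  have hpdDq : ∀ i j, ContDiff ℝ 1 (pd j fun y => D y i j * q y) := fun i j =>
    pd_contDiff_one (hDq i j) j
  have hpdDqs : ∀ i j, HasCompactSupport (pd j fun y => D y i j * q y) := fun i j =>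
    pd_hasCompactSupport (hDqs i j) j
  have hpdD : ∀ i j, ContDiff ℝ 1 (pd j fun y => D y i j) := fun i j =>
    pd_contDiff_one (hDij i j) j
  have hb : ∀ i, ContDiff ℝ 1 fun y => bvec f D y i := by
    intro i
    have hrw : (fun y => bvec f D y i)
        = fun y => (1 / 2 : ℝ) * ∑ j, pd j (fun z => D z i j) y - f y i := rfl
    rw [hrw]
    exact (contDiff_const.mul (ContDiff.sum fun j _ => hpdD i j)).sub (hfi i)
  -- integrability
  have intA : ∀ i, Integrable fun x => f x i * q x * pd i q x := fun i =>
    (((hfi i).continuous.mul hq.continuous).mul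
      (hpdq i).continuous).integrable_of_hasCompactSupport (hqsupp.mul_left.mul_right)
  have intB : ∀ i j, Integrable fun x => pd j (fun y => D y i j) x * (q x * pd i q x) :=
    fun i j =>
    ((pd_continuous ((hDij i j).of_le one_le_two) j).mul
      (hq.continuous.mul (hpdq i).continuous)).integrable_of_hasCompactSupport
      ((hqsupp.mul_right).mul_left)
  have intC : ∀ i j, Integrable fun x => D x i j * pd j q x * pd i q x := fun i j =>
    (((hDij i j).continuous.mul (hpdq j).continuous).mul
      (hpdq i).continuous).integrable_of_hasCompactSupport ((hpdqs j).mul_left.mul_right)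
  have intC' : ∀ i j, Integrable fun x => D x i j * pd i q x * pd j q x := fun i j =>
    (((hDij i j).continuous.mul (hpdq i).continuous).mul
      (hpdq j).continuous).integrable_of_hasCompactSupport ((hpdqs i).mul_left.mul_right)
  have intG1 : ∀ i, Integrable fun x => pd i (fun y => f y i * q y) x * q x := fun i =>
    ((pd_continuous (hfq i) i).mul hq.continuous).integrable_of_hasCompactSupport
      ((pd_hasCompactSupport (hfqs i) i).mul_right)
  have intG2 : ∀ i j, Integrable fun x => pd i (pd j fun y => D y i j * q y) x * q x :=
    fun i j =>
    ((pd_continuous (hpdDq i j) i).mul hq.continuous).integrable_of_hasCompactSupport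
      ((pd_hasCompactSupport (hpdDqs i j) i).mul_right)
  have intH : ∀ i, Integrable fun x => pd i (fun y => bvec f D y i) x * q x ^ 2 := by
    intro i
    have hrw : (fun x => pd i (fun y => bvec f D y i) x * q x ^ 2)
        = fun x => pd i (fun y => bvec f D y i) x * (q x * q x) := by
      funext x; ring
    rw [hrw]
    exact ((pd_continuous (hb i) i).mul
      (hq.continuous.mul hq.continuous)).integrable_of_hasCompactSupport
      ((hqsupp.mul_right).mul_left)
  -- splitting the left-hand side integral
  have expand : ∀ x, fokkerPlanck f D q x * q x
      = (1 / 2) * (∑ i, ∑ j, pd i (pd j fun y => D y i j * q y) x * q x)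
        - ∑ i, pd i (fun y => f y i * q y) x * q x := by
    intro x
    simp only [fokkerPlanck, add_mul, neg_mul, mul_assoc, Finset.sum_mul]
    ring
  have hsplit : ∫ x, fokkerPlanck f D q x * q x
      = (1 / 2) * (∑ i, ∑ j, ∫ x, pd i (pd j fun y => D y i j * q y) x * q x)
        - ∑ i, ∫ x, pd i (fun y => f y i * q y) x * q x := by
    rw [show (fun x => fokkerPlanck f D q x * q x)
        = fun x => (1 / 2) * (∑ i, ∑ j, pd i (pd j fun y => D y i j * q y) x * q x)
          - ∑ i, pd i (fun y => f y i * q y) x * q x from funext expand]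
    rw [integral_sub ((integrable_finset_sum _ fun i _ =>
        integrable_finset_sum _ fun j _ => intG2 i j).const_mul _)
        (integrable_finset_sum _ fun i _ => intG1 i),
      integral_const_mul,
      integral_finset_sum _ fun i _ => integrable_finset_sum _ fun j _ => intG2 i j,
      integral_finset_sum _ fun i _ => intG1 i,
      Finset.sum_congr rfl fun i _ => integral_finset_sum _ fun j _ => intG2 i j]
  -- splitting the right-hand side integral
  have hsplitR : ∫ x, ((∑ i, ∑ j, D x i j * pd i q x * pd j q x) - divb f D x * (q x) ^ 2)
      = (∑ i, ∑ j, ∫ x, D x i j * pd i q x * pd j q x)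
        - ∑ i, ∫ x, pd i (fun y => bvec f D y i) x * q x ^ 2 := by
    rw [show (fun x => (∑ i, ∑ j, D x i j * pd i q x * pd j q x) - divb f D x * (q x) ^ 2)
        = fun x => (∑ i, ∑ j, D x i j * pd i q x * pd j q x)
          - ∑ i, pd i (fun y => bvec f D y i) x * q x ^ 2 from
      funext fun x => by simp only [divb, Finset.sum_mul]]
    rw [integral_sub (integrable_finset_sum _ fun i _ =>
        integrable_finset_sum _ fun j _ => intC' i j)
        (integrable_finset_sum _ fun i _ => intH i),
      integral_finset_sum _ fun i _ => integrable_finset_sum _ fun j _ => intC' i j,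
      integral_finset_sum _ fun i _ => intH i,
      Finset.sum_congr rfl fun i _ => integral_finset_sum _ fun j _ => intC' i j]
  -- integration by parts identities
  have EQ1 : ∀ i, ∫ x, pd i (fun y => f y i * q y) x * q x
      = -∫ x, f x i * q x * pd i q x := fun i => by
    rw [pd_integral_mul i (hfq i) (hfqs i) hq1 hqsupp]
  have EQ2 : ∀ i j, ∫ x, pd i (pd j fun y => D y i j * q y) x * q x
      = -((∫ x, pd j (fun y => D y i j) x * (q x * pd i q x))
          + ∫ x, D x i j * pd j q x * pd i q x) := by
    intro i j
    rw [pd_integral_mul i (hpdDq i j) (hpdDqs i j) hq1 hqsupp]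
    have hpt : ∀ x, pd j (fun y => D y i j * q y) x * pd i q x
        = pd j (fun y => D y i j) x * (q x * pd i q x) + D x i j * pd j q x * pd i q x := by
      intro x
      rw [pd_mul (((hDij i j).differentiable two_ne_zero) x) ((hq1.differentiable one_ne_zero) x) j]
      ring
    rw [show (fun x => pd j (fun y => D y i j * q y) x * pd i q x)
        = fun x => pd j (fun y => D y i j) x * (q x * pd i q x)
          + D x i j * pd j q x * pd i q x from funext hpt,
      integral_add (intB i j) (intC i j)]
  have EQ3 : ∀ i j, ∫ x, D x i j * pd i q x * pd j q x
      = ∫ x, D x i j * pd j q x * pd i q x := fun i j =>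
    integral_congr_ae (Filter.Eventually.of_forall fun x => by ring)
  -- cutoff function
  obtain ⟨R, hR⟩ := hqsupp.isBounded.subset_ball (0 : Fin d → ℝ)
  have hR'pos : (0 : ℝ) < max R 1 := lt_of_lt_of_le one_pos (le_max_right _ _)
  have hKball : tsupport q ⊆ Metric.ball 0 (max R 1) :=
    hR.trans (Metric.ball_subset_ball (le_max_left _ _))
  let φ : ContDiffBump (0 : Fin d → ℝ) := ⟨max R 1, max R 1 + 1, hR'pos, lt_add_one _⟩
  have hφ1 : ∀ x ∈ Metric.ball (0 : Fin d → ℝ) (max R 1), φ x = 1 := fun x hx =>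
    φ.one_of_mem_closedBall (Metric.ball_subset_closedBall hx)
  have EQ4 : ∀ i, ∫ x, pd i (fun y => bvec f D y i) x * q x ^ 2
      = 2 * (∫ x, f x i * q x * pd i q x)
        - ∑ j, ∫ x, pd j (fun y => D y i j) x * (q x * pd i q x) := by
    intro i
    have hu : ContDiff ℝ 1 fun y => φ y * bvec f D y i := φ.contDiff.mul (hb i)
    have hus : HasCompactSupport fun y => φ y * bvec f D y i := φ.hasCompactSupport.mul_right
    have hv : ContDiff ℝ 1 fun y => q y * q y := hq1.mul hq1
    have hvs : HasCompactSupport fun y => q y * q y := hqsupp.mul_right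
    have step1 : (fun x => pd i (fun y => bvec f D y i) x * q x ^ 2)
        = fun x => pd i (fun y => φ y * bvec f D y i) x * (fun y => q y * q y) x := by
      funext x
      by_cases hx : x ∈ Metric.ball (0 : Fin d → ℝ) (max R 1)
      · have heq : (fun y => φ y * bvec f D y i) =ᶠ[nhds x] fun y => bvec f D y i := by
          filter_upwards [Metric.isOpen_ball.mem_nhds hx] with y hy
          rw [hφ1 y hy, one_mul]
        have hpd : pd i (fun y => φ y * bvec f D y i) x = pd i (fun y => bvec f D y i) x := by
          unfold pd; rw [heq.fderiv_eq]
        rw [hpd]; ring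
      · have hqx : q x = 0 := image_eq_zero_of_notMem_tsupport fun hmem => hx (hKball hmem)
        simp [hqx]
    rw [step1, pd_integral_mul i hu hus hv hvs]
    have step2 : (fun x => (fun y => φ y * bvec f D y i) x * pd i (fun y => q y * q y) x)
        = fun x => (∑ j, pd j (fun y => D y i j) x * (q x * pd i q x))
          - 2 * (f x i * q x * pd i q x) := by
      funext x
      have hpdq2 : pd i (fun y => q y * q y) x = pd i q x * q x + q x * pd i q x :=
        pd_mul ((hq1.differentiable one_ne_zero) x) ((hq1.differentiable one_ne_zero) x) i
      by_cases hqx : q x = 0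
      · simp [hpdq2, hqx]
      · have hx : x ∈ Metric.ball (0 : Fin d → ℝ) (max R 1) :=
          hKball (subset_tsupport q (by simpa [Function.mem_support] using hqx))
        show φ x * bvec f D x i * pd i (fun y => q y * q y) x = _
        rw [hpdq2, hφ1 x hx, one_mul,
          show bvec f D x i = (1 / 2 : ℝ) * ∑ j, pd j (fun y => D y i j) x - f x i from rfl,
          ← Finset.sum_mul]
        ring
    rw [step2,
      integral_sub (integrable_finset_sum _ fun j _ => intB i j) ((intA i).const_mul 2),
      integral_finset_sum _ fun j _ => intB i j, integral_const_mul]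
    ring
  -- final assembly
  rw [hsplit, hsplitR,
    show (∑ i, ∑ j, ∫ x, D x i j * pd i q x * pd j q x)
        = ∑ i, ∑ j, ∫ x, D x i j * pd j q x * pd i q x from
      Finset.sum_congr rfl fun i _ => Finset.sum_congr rfl fun j _ => EQ3 i j]
  simp only [EQ1, EQ2, EQ4]
  simp only [Finset.sum_add_distrib, Finset.sum_neg_distrib, Finset.sum_sub_distrib,
    ← Finset.mul_sum]
  ring
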